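/- The function Ṽ₀ defined by Ṽ₀(x)=δx² for 0≤x≤f₀ and Ṽ₀(x)=λ/α² + (λ/α)x² + B₀e^{−x√(2α)} for x>f₀ is continuously differentiable on (0,∞); in particular the two expressions and their first derivatives agree at x=f₀ (smooth fit at f₀). -/

import Mathlib

/-- Ṽ₀ is C¹ on (0,∞); in particular smooth fit holds at f₀. -/
theorem stmt_4 (α δ lam : ℝ) (hα : 0 < α) (hδ : 0 < δ) (hlam : 0 < lam)
    (hltd : lam < α * δ)
    (f₀ : ℝ)
    (hf₀ : f₀ = (1 / Real.sqrt (2 * α)) * (Real.sqrt ((α * δ + lam) / (α * δ - lam)) - 1))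
    (B₀ : ℝ)
    (hB₀ : B₀ = -(2 * f₀ / (α * Real.sqrt (2 * α))) * (α * δ - lam) *
      Real.exp (f₀ * Real.sqrt (2 * α)))
    (V₀ : ℝ → ℝ)
    (hV₀l : ∀ x, 0 ≤ x → x ≤ f₀ → V₀ x = δ * x ^ 2)
    (hV₀r : ∀ x, f₀ < x → V₀ x = lam / α ^ 2 + (lam / α) * x ^ 2 +
      B₀ * Real.exp (-x * Real.sqrt (2 * α))) :
    ContDiffOn ℝ 1 V₀ (Set.Ioi 0) ∧
    δ * f₀ ^ 2 = lam / α ^ 2 + (lam / α) * f₀ ^ 2 +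
      B₀ * Real.exp (-f₀ * Real.sqrt (2 * α)) ∧
    2 * δ * f₀ = 2 * (lam / α) * f₀ -
      Real.sqrt (2 * α) * B₀ * Real.exp (-f₀ * Real.sqrt (2 * α)) := by
  set s := Real.sqrt (2 * α) with hs_def
  have hs : 0 < s := Real.sqrt_pos.mpr (by linarith)
  have hs2 : s ^ 2 = 2 * α := Real.sq_sqrt (by linarith)
  have hd : 0 < α * δ - lam := by linarith
  set r := Real.sqrt ((α * δ + lam) / (α * δ - lam)) with hr_def
  have hr2 : r ^ 2 = (α * δ + lam) / (α * δ - lam) :=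
    Real.sq_sqrt (by positivity)
  have hr1 : 1 < r := by
    rw [hr_def]
    rw [show (1:ℝ) = Real.sqrt 1 by simp]
    apply Real.sqrt_lt_sqrt (by norm_num)
    rw [lt_div_iff₀ hd]; linarith
  have hf₀pos : 0 < f₀ := by
    rw [hf₀]
    exact mul_pos (by positivity) (by linarith)
  have hBe : B₀ * Real.exp (-f₀ * s) = -(2 * f₀ / (α * s)) * (α * δ - lam) := by
    rw [hB₀]
    have h0 : Real.exp (f₀ * s) * Real.exp (-f₀ * s) = 1 := by
      rw [← Real.exp_add]; ring_nf; exact Real.exp_zero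
    calc -(2 * f₀ / (α * s)) * (α * δ - lam) * Real.exp (f₀ * s) * Real.exp (-f₀ * s)
        = -(2 * f₀ / (α * s)) * (α * δ - lam) * (Real.exp (f₀ * s) * Real.exp (-f₀ * s)) := by
          ring
      _ = -(2 * f₀ / (α * s)) * (α * δ - lam) := by rw [h0]; ring
  have eq1 : δ * f₀ ^ 2 = lam / α ^ 2 + (lam / α) * f₀ ^ 2 +
      B₀ * Real.exp (-f₀ * s) := by
    rw [hBe]
    have hf : f₀ = (r - 1) / s := by rw [hf₀]; ring
    rw [hf]
    have h1 : (α * δ - lam) * r ^ 2 = α * δ + lam := by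
      rw [hr2]; field_simp
    field_simp
    linear_combination α * h1 - lam * hs2
  have eq2 : 2 * δ * f₀ = 2 * (lam / α) * f₀ - s * B₀ * Real.exp (-f₀ * s) := by
    rw [mul_assoc s B₀, hBe]
    field_simp
    ring
  refine ⟨?_, eq1, eq2⟩
  -- the two pieces and their derivatives
  set g : ℝ → ℝ := fun x => lam / α ^ 2 + (lam / α) * x ^ 2 + B₀ * Real.exp (-x * s)
    with hg_def
  set h : ℝ → ℝ := fun x => δ * x ^ 2 with hh_def
  have hh : ∀ x : ℝ, HasDerivAt h (2 * δ * x) x := by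
    intro x
    have := (hasDerivAt_pow 2 x).const_mul δ
    refine this.congr_deriv ?_
    simp; ring
  have hg : ∀ x : ℝ, HasDerivAt g (2 * (lam / α) * x - s * B₀ * Real.exp (-x * s)) x := by
    intro x
    have he : HasDerivAt (fun x : ℝ => Real.exp (-x * s)) (Real.exp (-x * s) * (-s)) x := by
      exact HasDerivAt.exp (by simpa using ((hasDerivAt_id x).neg.mul_const s))
    have h1 : HasDerivAt (fun x : ℝ => (lam / α) * x ^ 2) (lam / α * (2 * x)) x := by
      simpa using (hasDerivAt_pow 2 x).const_mul (lam / α)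
    have := ((hasDerivAt_const x (lam / α ^ 2)).add h1).add (he.const_mul B₀)
    refine this.congr_deriv ?_
    ring
  -- V₀ equals g on Ici f₀
  have hVg : Set.EqOn V₀ g (Set.Ici f₀) := by
    intro x hx
    rcases eq_or_lt_of_le (Set.mem_Ici.mp hx) with hxe | hxl
    · rw [← hxe, hV₀l f₀ hf₀pos.le le_rfl, hg_def]
      simpa using eq1
    · exact hV₀r x hxl
  have hD : ∀ x ∈ Set.Ioi (0:ℝ), HasDerivAt V₀
      (if x ≤ f₀ then 2 * δ * x else 2 * (lam / α) * x - s * B₀ * Real.exp (-x * s)) x := by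
    intro x hx
    simp only [Set.mem_Ioi] at hx
    rcases lt_trichotomy x f₀ with hxf | hxf | hxf
    · rw [if_pos hxf.le]
      refine (hh x).congr_of_eventuallyEq ?_
      filter_upwards [Ioo_mem_nhds hx hxf] with y hy
      exact hV₀l y hy.1.le hy.2.le
    · subst hxf
      rw [if_pos le_rfl]
      have hleft : HasDerivWithinAt V₀ (2 * δ * x) (Set.Iic x) x := by
        refine ((hh x).hasDerivWithinAt).congr_of_eventuallyEq ?_ (hV₀l x hx.le le_rfl)
        filter_upwards [self_mem_nhdsWithin,
          mem_nhdsWithin_of_mem_nhds (Ioi_mem_nhds hx)] with y hy1 hy2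
        exact hV₀l y (le_of_lt hy2) hy1
      have hright : HasDerivWithinAt V₀ (2 * δ * x) (Set.Ici x) x := by
        have : HasDerivWithinAt g (2 * δ * x) (Set.Ici x) x := by
          rw [eq2]; exact (hg x).hasDerivWithinAt
        exact this.congr hVg (hVg (Set.mem_Ici.mpr le_rfl))
      have := hleft.union hright
      rwa [Set.Iic_union_Ici, hasDerivWithinAt_univ] at this
    · rw [if_neg (not_le.mpr hxf)]
      refine (hg x).congr_of_eventuallyEq ?_
      filter_upwards [Ioi_mem_nhds hxf] with y hy
      exact hV₀r y hy
  have hdiff : DifferentiableOn ℝ V₀ (Set.Ioi 0) := fun x hx =>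
    ((hD x hx).differentiableAt).differentiableWithinAt
  have hcd : Continuous (fun x : ℝ =>
      if x ≤ f₀ then 2 * δ * x else 2 * (lam / α) * x - s * B₀ * Real.exp (-x * s)) := by
    apply Continuous.if_le
    · fun_prop
    · fun_prop
    · exact continuous_id
    · exact continuous_const
    · intro x hxe
      rw [hxe]; exact eq2
  rw [show (1 : WithTop ℕ∞) = 0 + 1 by norm_num,
    contDiffOn_succ_iff_deriv_of_isOpen isOpen_Ioi]
  refine ⟨hdiff, by simp, ?_⟩
  rw [contDiffOn_zero]
  exact hcd.continuousOn.congr fun x hx => (hD x hx).deriv
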